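/- arXiv:1701.00445 — 5 statements merged into one kernel-verified Lean document; each statement's English description precedes it below -/
import Mathlib

section
/- Let T, t_A, t_B be positive integers with t_B ≤ t_A ≤ T. For each positive integer k, let c(k) denote the number of pairs (x, y) with x, y ∈ {1, …, T·k} such that y ≤ x + t_A·k − 1 and x ≤ y + t_B·k − 1. Then the sequence c(k)/(T·k)² converges, as k → ∞, to (t_A + t_B)/T − (t_A² + t_B²)/(2T²). -/
lemma count_ge (N a : ℕ) (ha : 1 ≤ a) (haN : a ≤ N) :
    ((Finset.Icc 1 N ×ˢ Finset.Icc 1 N).filter (fun p : ℕ×ℕ => p.1 + a ≤ p.2)).card * 2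
      = (N - a) * (N - a + 1) := by
  have h1 : ((Finset.Icc 1 N ×ˢ Finset.Icc 1 N).filter (fun p : ℕ×ℕ => p.1 + a ≤ p.2)).card
      = ∑ x ∈ Finset.Icc 1 N, (N + 1 - (x + a)) := by
    rw [Finset.card_filter, Finset.sum_product]
    refine Finset.sum_congr rfl fun x hx => ?_
    rw [← Finset.card_filter]
    have h : (Finset.Icc 1 N).filter (fun y => x + a ≤ y) = Finset.Icc (x + a) N := by
      ext y; simp only [Finset.mem_filter, Finset.mem_Icc]; omega
    rw [h, Nat.card_Icc]
  rw [h1, Finset.sum_mul, show Finset.Icc 1 N = Finset.Ico 1 (N+1) from (Finset.Ico_add_one_right_eq_Icc (a := 1) (b := N)).symm, Finset.sum_Ico_eq_sum_range]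
  have h2 : ∀ i ∈ Finset.range (N + 1 - 1), (N + 1 - (1 + i + a)) * 2 = (N - a - i) * 2 := by
    intro i hi; omega
  rw [Finset.sum_congr rfl h2]
  have hsub : Finset.range (N - a) ⊆ Finset.range (N + 1 - 1) := by
    apply Finset.range_subset_range.2; omega
  rw [← Finset.sum_subset hsub (by intro i _ hi; simp at hi ⊢; omega)]
  rw [← Finset.sum_range_reflect]
  have h3 : ∀ j ∈ Finset.range (N - a), (N - a - (N - a - 1 - j)) * 2 = (j + 1) * 2 := by
    intro j hj; simp at hj; omega
  rw [Finset.sum_congr rfl h3]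
  have := Finset.sum_range_id_mul_two (N - a)
  have h4 : ∑ j ∈ Finset.range (N - a), (j + 1) * 2 = (∑ j ∈ Finset.range (N - a), j) * 2 + (N - a) * 2 := by
    rw [Finset.sum_mul]
    have e : ∀ j ∈ Finset.range (N - a), (j + 1) * 2 = j * 2 + 2 := fun j _ => by ring
    rw [Finset.sum_congr rfl e, Finset.sum_add_distrib, Finset.sum_const, Finset.card_range,
      smul_eq_mul]
  rw [h4, this]
  cases h : N - a with
  | zero => simp
  | succ m => simp [Nat.succ_sub_one]; ring

lemma count_ge' (N b : ℕ) (hb : 1 ≤ b) (hbN : b ≤ N) :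
    ((Finset.Icc 1 N ×ˢ Finset.Icc 1 N).filter (fun p : ℕ×ℕ => p.2 + b ≤ p.1)).card * 2
      = (N - b) * (N - b + 1) := by
  rw [← count_ge N b hb hbN]
  congr 1
  apply Finset.card_nbij (fun p => p.swap)
  · intro p hp
    simp only [Finset.mem_coe, Finset.mem_filter, Finset.mem_product, Finset.mem_Icc] at hp ⊢
    exact ⟨⟨hp.1.2, hp.1.1⟩, hp.2⟩
  · intro p _ q _ h
    exact Prod.swap_injective h
  · intro p hp
    refine ⟨p.swap, ?_, by simp⟩
    simp only [Finset.coe_filter, Set.mem_setOf_eq, Finset.mem_product, Finset.mem_Icc] at hp ⊢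
    exact ⟨⟨hp.1.2, hp.1.1⟩, hp.2⟩

lemma count_good (N a b : ℕ) (hb : 1 ≤ b) (hba : b ≤ a) (haN : a ≤ N) :
    ((Finset.Icc 1 N ×ˢ Finset.Icc 1 N).filter
        (fun p : ℕ×ℕ => p.2 ≤ p.1 + a - 1 ∧ p.1 ≤ p.2 + b - 1)).card * 2
      + (N - a) * (N - a + 1) + (N - b) * (N - b + 1) = 2 * (N * N) := by
  have ha : 1 ≤ a := hba.trans' hb
  set S := Finset.Icc 1 N ×ˢ Finset.Icc 1 N with hS
  have hcardS : S.card = N * N := by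
    simp [hS, Nat.card_Icc]
  have hgood : S.filter (fun p : ℕ×ℕ => p.2 ≤ p.1 + a - 1 ∧ p.1 ≤ p.2 + b - 1)
      = S \ S.filter (fun p : ℕ×ℕ => p.1 + a ≤ p.2 ∨ p.2 + b ≤ p.1) := by
    rw [← Finset.filter_not]
    apply Finset.filter_congr
    intro p _
    constructor
    · intro h; push_neg; omega
    · intro h; push_neg at h; omega
  have hdisj : Disjoint (S.filter (fun p : ℕ×ℕ => p.1 + a ≤ p.2))
      (S.filter (fun p : ℕ×ℕ => p.2 + b ≤ p.1)) := by
    rw [Finset.disjoint_left]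
    intro p hp hq
    simp only [Finset.mem_filter] at hp hq
    omega
  have hor : S.filter (fun p : ℕ×ℕ => p.1 + a ≤ p.2 ∨ p.2 + b ≤ p.1)
      = S.filter (fun p : ℕ×ℕ => p.1 + a ≤ p.2) ∪ S.filter (fun p : ℕ×ℕ => p.2 + b ≤ p.1) :=
    Finset.filter_or _ _ _
  have hle : (S.filter (fun p : ℕ×ℕ => p.1 + a ≤ p.2 ∨ p.2 + b ≤ p.1)).card ≤ S.card :=
    Finset.card_filter_le _ _
  have hcard : (S.filter (fun p : ℕ×ℕ => p.2 ≤ p.1 + a - 1 ∧ p.1 ≤ p.2 + b - 1)).card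
      = S.card - (S.filter (fun p : ℕ×ℕ => p.1 + a ≤ p.2 ∨ p.2 + b ≤ p.1)).card := by
    rw [hgood, Finset.card_sdiff_of_subset (Finset.filter_subset _ _)]
  have hu : (S.filter (fun p : ℕ×ℕ => p.1 + a ≤ p.2 ∨ p.2 + b ≤ p.1)).card
      = (S.filter (fun p : ℕ×ℕ => p.1 + a ≤ p.2)).card
        + (S.filter (fun p : ℕ×ℕ => p.2 + b ≤ p.1)).card := by
    rw [hor, Finset.card_union_of_disjoint hdisj]
  have h1 := count_ge N a ha haN
  have h2 := count_ge' N b hb (hbN := hba.trans haN)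
  rw [hS] at hcard hu hle hcardS ⊢ 
  omega

open Filter

theorem overlap_prob_limit_single (T tA tB : ℕ)
    (htB : 0 < tB) (htBA : tB ≤ tA) (htAT : tA ≤ T) :
    Tendsto
      (fun k : ℕ =>
        ((((Finset.Icc 1 (T * k) ×ˢ Finset.Icc 1 (T * k)).filter
            (fun p : ℕ × ℕ => p.2 ≤ p.1 + tA * k - 1 ∧ p.1 ≤ p.2 + tB * k - 1)).card : ℝ)
          / (T * k : ℝ) ^ 2))
      atTop
      (nhds ((tA + tB : ℝ) / T - ((tA : ℝ) ^ 2 + (tB : ℝ) ^ 2) / (2 * (T : ℝ) ^ 2))) := by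
  have hT : 0 < T := lt_of_lt_of_le (htB.trans_le htBA) htAT
  have hTR : (0:ℝ) < (T:ℝ) := by exact_mod_cast hT
  have hTA : tB ≤ T := htBA.trans htAT
  set u : ℝ := (T : ℝ) - (tA : ℝ) with hu
  set v : ℝ := (T : ℝ) - (tB : ℝ) with hv
  set c0 : ℝ := 1 - (u^2 + v^2)/(2*(T:ℝ)^2) with hc0
  set c1 : ℝ := -(u+v)/(2*(T:ℝ)^2) with hc1
  have key : ∀ k : ℕ, 1 ≤ k →
      ((((Finset.Icc 1 (T * k) ×ˢ Finset.Icc 1 (T * k)).filter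
            (fun p : ℕ × ℕ => p.2 ≤ p.1 + tA * k - 1 ∧ p.1 ≤ p.2 + tB * k - 1)).card : ℝ)
          / (T * k : ℝ) ^ 2) = c0 + c1 * (1/(k:ℝ)) := by
    intro k hk
    have hb : 1 ≤ tB * k := Nat.one_le_iff_ne_zero.2 (by positivity)
    have hba : tB * k ≤ tA * k := Nat.mul_le_mul_right k htBA
    have haN : tA * k ≤ T * k := Nat.mul_le_mul_right k htAT
    have H := count_good (T*k) (tA*k) (tB*k) hb hba haN
    rw [← Nat.sub_mul T tA k, ← Nat.sub_mul T tB k] at H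
    have HR : ((((Finset.Icc 1 (T * k) ×ˢ Finset.Icc 1 (T * k)).filter
            (fun p : ℕ × ℕ => p.2 ≤ p.1 + tA * k - 1 ∧ p.1 ≤ p.2 + tB * k - 1)).card : ℝ)) * 2
        + u * k * (u * k + 1) + v * k * (v * k + 1) = 2 * ((T:ℝ) * k)^2 := by
      have H2 := congrArg (fun n : ℕ => (n : ℝ)) H
      push_cast [Nat.cast_sub htAT, Nat.cast_sub hTA] at H2
      rw [hu, hv]
      linarith [H2]
    have hk0 : ((k:ℝ)) ≠ 0 := by positivity
    have hT0 : ((T:ℝ)) ≠ 0 := ne_of_gt hTR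
    rw [hc0, hc1]
    rw [div_eq_iff (by positivity : ((T:ℝ) * k)^2 ≠ 0)]
    field_simp
    linear_combination HR
  have hev : (fun k : ℕ =>
        ((((Finset.Icc 1 (T * k) ×ˢ Finset.Icc 1 (T * k)).filter
            (fun p : ℕ × ℕ => p.2 ≤ p.1 + tA * k - 1 ∧ p.1 ≤ p.2 + tB * k - 1)).card : ℝ)
          / (T * k : ℝ) ^ 2))
      =ᶠ[atTop] (fun k : ℕ => c0 + c1 * (1/(k:ℝ))) := by
    filter_upwards [eventually_ge_atTop 1] with k hk using key k hk
  rw [Filter.tendsto_congr' hev]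
  have hlim : Tendsto (fun k : ℕ => c0 + c1 * (1/(k:ℝ))) atTop (nhds (c0 + c1 * 0)) :=
    tendsto_const_nhds.add (tendsto_const_nhds.mul tendsto_one_div_atTop_nhds_zero_nat)
  have hval : c0 + c1 * 0 = ((tA:ℝ) + tB) / T - ((tA : ℝ) ^ 2 + (tB : ℝ) ^ 2) / (2 * (T : ℝ) ^ 2) := by
    rw [hc0, hc1, hu, hv]
    have hT0 : ((T:ℝ)) ≠ 0 := ne_of_gt hTR
    field_simp
    ring
  rw [← hval]
  exact hlim
end

section
/- Let a, b be fixed natural numbers, let m, m_a, m_b be positive real numbers, and let M, M_A, M_B : ℕ → ℕ be sequences such that M(k)/k → m, M_A(k)/k → m_a and M_B(k)/k → m_b as k → ∞. Then the sequence k ↦ [(M(k) + a + b)! · M_A(k)! · M_B(k)!] / [(M_A(k) + a)! · (M_B(k) + b)! · M(k)!] converges to m^{a+b} / (m_a^a · m_b^b). -/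
open Filter

lemma fact_add_prod (N c : ℕ) :
    (N + c).factorial = N.factorial * ∏ i ∈ Finset.range c, (N + i + 1) := by
  induction c with
  | zero => simp
  | succ c ih =>
    rw [Finset.prod_range_succ, ← mul_assoc, ← ih]
    show (N + c + 1).factorial = _
    rw [Nat.factorial_succ]
    ring

lemma fact_ratio_tendsto (c : ℕ) (n : ℝ) (N : ℕ → ℕ)
    (hN : Tendsto (fun k : ℕ => (N k : ℝ) / k) atTop (nhds n)) :
    Tendsto (fun k : ℕ => ((N k + c).factorial : ℝ) / (N k).factorial / (k : ℝ) ^ c)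
      atTop (nhds (n ^ c)) := by
  have heq : ∀ᶠ k : ℕ in atTop,
      ((N k + c).factorial : ℝ) / (N k).factorial / (k : ℝ) ^ c
        = ∏ i ∈ Finset.range c, (((N k : ℝ) + i + 1) / k) := by
    filter_upwards [eventually_ge_atTop 1] with k hk
    have hk0 : (k : ℝ) ≠ 0 := by positivity
    have hf : ((N k).factorial : ℝ) ≠ 0 := by positivity
    rw [fact_add_prod]
    push_cast
    rw [Finset.prod_div_distrib, Finset.prod_const, Finset.card_range]
    field_simp
  have hlim : Tendsto (fun k : ℕ => ∏ i ∈ Finset.range c, (((N k : ℝ) + i + 1) / k))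
      atTop (nhds (∏ _i ∈ Finset.range c, n)) := by
    apply tendsto_finset_prod
    intro i _
    have h1 : Tendsto (fun k : ℕ => ((i : ℝ) + 1) / k) atTop (nhds 0) :=
      tendsto_const_div_atTop_nhds_zero_nat _
    have h2 := hN.add h1
    simp only [add_zero] at h2
    refine h2.congr' ?_
    filter_upwards [eventually_ge_atTop 1] with k hk
    have hk0 : (k : ℝ) ≠ 0 := by positivity
    field_simp
    ring
  rw [Finset.prod_const, Finset.card_range] at hlim
  exact hlim.congr' (by filter_upwards [heq] with k h using h.symm)

theorem factorial_ratio_limit (a b : ℕ) (m mA mB : ℝ)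
    (hm : 0 < m) (hmA : 0 < mA) (hmB : 0 < mB)
    (M MA MB : ℕ → ℕ)
    (hM : Tendsto (fun k : ℕ => (M k : ℝ) / k) atTop (nhds m))
    (hMA : Tendsto (fun k : ℕ => (MA k : ℝ) / k) atTop (nhds mA))
    (hMB : Tendsto (fun k : ℕ => (MB k : ℝ) / k) atTop (nhds mB)) :
    Tendsto
      (fun k : ℕ =>
        ((M k + a + b).factorial * (MA k).factorial * (MB k).factorial : ℝ) /
          ((MA k + a).factorial * (MB k + b).factorial * (M k).factorial : ℝ))
      atTop (nhds (m ^ (a + b) / (mA ^ a * mB ^ b))) := by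
  have hA := fact_ratio_tendsto (a + b) m M hM
  have hB := fact_ratio_tendsto a mA MA hMA
  have hC := fact_ratio_tendsto b mB MB hMB
  have hBC := hB.mul hC
  have hne : mA ^ a * mB ^ b ≠ 0 := by positivity
  have hmain := hA.div hBC hne
  refine hmain.congr' ?_
  filter_upwards [eventually_ge_atTop 1] with k hk
  have hk0 : (k : ℝ) ≠ 0 := by positivity
  have h1 : ((M k).factorial : ℝ) ≠ 0 := by positivity
  have h2 : ((MA k).factorial : ℝ) ≠ 0 := by positivity
  have h3 : ((MB k).factorial : ℝ) ≠ 0 := by positivity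
  have h4 : ((MA k + a).factorial : ℝ) ≠ 0 := by positivity
  have h5 : ((MB k + b).factorial : ℝ) ≠ 0 := by positivity
  have hma : (M k + a + b) = M k + (a + b) := by ring
  rw [Pi.div_apply]
  rw [hma]
  field_simp
  ring
end

section
/- Let T, t_A, t_B be positive integers and n_A, n_B natural numbers with t_A·n_A + t_B·n_B < T. Then the limit as k → ∞ of [C(n_A + n_B, n_A) · C(T·k − (t_A·k − 1)·n_A − (t_B·k − 1)·n_B, n_A + n_B)] / [C(T·k − (t_A·k − 1)·n_A, n_A) · C(T·k − (t_B·k − 1)·n_B, n_B)] equals (T − t_A·n_A − t_B·n_B)^{n_A + n_B} / [(T − t_A·n_A)^{n_A} · (T − t_B·n_B)^{n_B}]. -/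
open Filter Finset

lemma asc_prod (m n : ℕ) : m.ascFactorial n = ∏ i ∈ range n, (m + i) := by
  induction n with
  | zero => simp [Nat.ascFactorial]
  | succ n ih => rw [Nat.ascFactorial_succ, prod_range_succ, ih, mul_comm]

lemma choose_lim (a n : ℕ) :
    Tendsto (fun k : ℕ => (Nat.choose (a * k + n) n : ℝ) / (k : ℝ) ^ n) atTop
      (nhds ((a : ℝ) ^ n / (Nat.factorial n : ℝ))) := by
  have hfac : (Nat.factorial n : ℝ) ≠ 0 := Nat.cast_ne_zero.mpr n.factorial_ne_zero
  have key : ∀ k : ℕ, (Nat.choose (a * k + n) n : ℝ)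
      = (∏ i ∈ range n, ((a * k + 1 + i : ℕ) : ℝ)) / (Nat.factorial n : ℝ) := by
    intro k
    have h := Nat.ascFactorial_eq_factorial_mul_choose (a * k) n
    rw [asc_prod] at h
    have h2 : ((∏ i ∈ range n, (a * k + 1 + i) : ℕ) : ℝ) = (Nat.factorial n : ℝ) * ((a * k + n).choose n : ℝ) := by
      exact_mod_cast congrArg (Nat.cast : ℕ → ℝ) h
    push_cast at h2 ⊢
    field_simp
    linarith [h2]
  have heq : ∀ᶠ k : ℕ in atTop,
      (∏ i ∈ range n, ((a : ℝ) + (1 + (i : ℝ)) / k)) / (Nat.factorial n : ℝ)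
        = (Nat.choose (a * k + n) n : ℝ) / (k : ℝ) ^ n := by
    filter_upwards [eventually_gt_atTop 0] with k hk
    have hk' : (k : ℝ) ≠ 0 := Nat.cast_ne_zero.mpr hk.ne'
    rw [key, div_div, mul_comm ((Nat.factorial n : ℝ)), ← div_div]
    congr 1
    have : ∀ i ∈ range n, ((a : ℝ) + (1 + (i : ℝ)) / k) = ((a * k + 1 + i : ℕ) : ℝ) / k := by
      intro i _
      push_cast
      field_simp
      ring
    rw [prod_congr rfl this, prod_div_distrib, prod_const, card_range]
  refine Tendsto.congr' heq ?_
  have hprod : Tendsto (fun k : ℕ => ∏ i ∈ range n, ((a : ℝ) + (1 + (i : ℝ)) / k)) atTop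
      (nhds ((a : ℝ) ^ n)) := by
    have := tendsto_finset_prod (range n)
      (fun i _ => (tendsto_const_nhds (x := (a : ℝ)) (f := atTop)).add
        (tendsto_const_div_atTop_nhds_zero_nat (1 + (i : ℝ))))
    simpa using this
  exact hprod.div_const _


theorem no_overlap_prob_limit (T tA tB : ℕ) (hT : 0 < T) (htA : 0 < tA) (htB : 0 < tB)
    (nA nB : ℕ) (h : tA * nA + tB * nB < T) :
    Tendsto
      (fun k : ℕ =>
        ((Nat.choose (nA + nB) nA *
            Nat.choose (T * k - (tA * k - 1) * nA - (tB * k - 1) * nB) (nA + nB) : ℝ)) /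
          ((Nat.choose (T * k - (tA * k - 1) * nA) nA *
            Nat.choose (T * k - (tB * k - 1) * nB) nB : ℝ)))
      atTop
      (nhds (((T : ℝ) - tA * nA - tB * nB) ^ (nA + nB) /
        (((T : ℝ) - tA * nA) ^ nA * ((T : ℝ) - tB * nB) ^ nB))) := by
  obtain ⟨a, ha⟩ : ∃ x, x = T - (tA * nA + tB * nB) := ⟨_, rfl⟩
  obtain ⟨b, hb⟩ : ∃ x, x = T - tA * nA := ⟨_, rfl⟩
  obtain ⟨c, hc⟩ : ∃ x, x = T - tB * nB := ⟨_, rfl⟩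
  set n := nA + nB with hn
  have hb0 : 0 < b := by omega
  have hc0 : 0 < c := by omega
  have ha0 : 0 < a := by omega
  -- cast identities
  have hca : (a : ℝ) = (T : ℝ) - tA * nA - tB * nB := by
    rw [ha, Nat.cast_sub h.le]; push_cast; ring
  have hcb : (b : ℝ) = (T : ℝ) - tA * nA := by
    rw [hb, Nat.cast_sub (by omega)]; push_cast; ring
  have hcc : (c : ℝ) = (T : ℝ) - tB * nB := by
    rw [hc, Nat.cast_sub (by omega)]; push_cast; ring
  -- index identities for k ≥ 1
  have e1 : ∀ k : ℕ, 1 ≤ k → T * k - (tA * k - 1) * nA = b * k + nA := by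
    intro k hk
    have h1 : tA * k * nA = (tA * nA) * k := by ring
    have h2 : b * k = T * k - (tA * nA) * k := by rw [hb, Nat.sub_mul]
    have h3 : (tA * nA) * k ≤ T * k := Nat.mul_le_mul_right k (by omega)
    have h4 : 1 * k ≤ tA * k := Nat.mul_le_mul_right k htA
    have h5 : nA * 1 ≤ nA * (tA * k) := Nat.mul_le_mul_left nA (by omega)
    have h6 : nA * (tA * k) = (tA * nA) * k := by ring
    rw [Nat.sub_one_mul, h1]
    omega
  have e2 : ∀ k : ℕ, 1 ≤ k → T * k - (tB * k - 1) * nB = c * k + nB := by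
    intro k hk
    have h1 : tB * k * nB = (tB * nB) * k := by ring
    have h2 : c * k = T * k - (tB * nB) * k := by rw [hc, Nat.sub_mul]
    have h3 : (tB * nB) * k ≤ T * k := Nat.mul_le_mul_right k (by omega)
    have h4 : 1 * k ≤ tB * k := Nat.mul_le_mul_right k htB
    have h5 : nB * 1 ≤ nB * (tB * k) := Nat.mul_le_mul_left nB (by omega)
    have h6 : nB * (tB * k) = (tB * nB) * k := by ring
    rw [Nat.sub_one_mul, h1]
    omega
  have e3 : ∀ k : ℕ, 1 ≤ k → T * k - (tA * k - 1) * nA - (tB * k - 1) * nB = a * k + n := by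
    intro k hk
    rw [e1 k hk]
    have h1 : tB * k * nB = (tB * nB) * k := by ring
    have h2 : a * k = b * k - (tB * nB) * k := by
      have : a = b - tB * nB := by omega
      rw [this, Nat.sub_mul]
    have h3 : (tB * nB) * k ≤ b * k := Nat.mul_le_mul_right k (by omega)
    have h4 : 1 * k ≤ tB * k := Nat.mul_le_mul_right k htB
    have h5 : nB * 1 ≤ nB * (tB * k) := Nat.mul_le_mul_left nB (by omega)
    have h6 : nB * (tB * k) = (tB * nB) * k := by ring
    rw [Nat.sub_one_mul, h1, hn]
    omega
  -- the auxiliary limit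
  have hfacA : (Nat.factorial nA : ℝ) ≠ 0 := Nat.cast_ne_zero.mpr nA.factorial_ne_zero
  have hfacB : (Nat.factorial nB : ℝ) ≠ 0 := Nat.cast_ne_zero.mpr nB.factorial_ne_zero
  have hfacN : (Nat.factorial n : ℝ) ≠ 0 := Nat.cast_ne_zero.mpr n.factorial_ne_zero
  have hbne : ((b : ℝ) ^ nA / (Nat.factorial nA : ℝ)) * ((c : ℝ) ^ nB / (Nat.factorial nB : ℝ)) ≠ 0 := by
    have h1 : (b : ℝ) ≠ 0 := Nat.cast_ne_zero.mpr hb0.ne'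
    have h2 : (c : ℝ) ≠ 0 := Nat.cast_ne_zero.mpr hc0.ne'
    positivity
  have hlim : Tendsto
      (fun k : ℕ =>
        ((Nat.choose n nA : ℝ) * ((Nat.choose (a * k + n) n : ℝ) / (k : ℝ) ^ n)) /
          (((Nat.choose (b * k + nA) nA : ℝ) / (k : ℝ) ^ nA) *
            ((Nat.choose (c * k + nB) nB : ℝ) / (k : ℝ) ^ nB)))
      atTop
      (nhds (((Nat.choose n nA : ℝ) * ((a : ℝ) ^ n / (Nat.factorial n : ℝ))) /
        (((b : ℝ) ^ nA / (Nat.factorial nA : ℝ)) * ((c : ℝ) ^ nB / (Nat.factorial nB : ℝ))))) :=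
    Tendsto.div ((choose_lim a n).const_mul _) ((choose_lim b nA).mul (choose_lim c nB)) hbne
  -- identify the limit value
  have hCnat : Nat.choose n nA * (Nat.factorial nA * Nat.factorial nB) = Nat.factorial n := by
    have h1 := Nat.choose_mul_factorial_mul_factorial (Nat.le_add_right nA nB)
    rw [Nat.add_sub_cancel_left] at h1
    rw [← mul_assoc]
    exact h1
  have hC : ((Nat.choose n nA : ℝ)) = (Nat.factorial n : ℝ) / ((Nat.factorial nA : ℝ) * (Nat.factorial nB : ℝ)) := by
    rw [eq_div_iff (by positivity)]
    exact_mod_cast hCnat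
  have hval : ((Nat.choose n nA : ℝ) * ((a : ℝ) ^ n / (Nat.factorial n : ℝ))) /
        (((b : ℝ) ^ nA / (Nat.factorial nA : ℝ)) * ((c : ℝ) ^ nB / (Nat.factorial nB : ℝ)))
      = ((T : ℝ) - tA * nA - tB * nB) ^ n /
        (((T : ℝ) - tA * nA) ^ nA * ((T : ℝ) - tB * nB) ^ nB) := by
    rw [← hca, ← hcb, ← hcc, hC]
    have hbne' : (b : ℝ) ≠ 0 := Nat.cast_ne_zero.mpr hb0.ne'
    have hcne' : (c : ℝ) ≠ 0 := Nat.cast_ne_zero.mpr hc0.ne'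
    field_simp
  rw [← hval]
  refine Tendsto.congr' ?_ hlim
  filter_upwards [eventually_ge_atTop 1] with k hk
  have hk' : (k : ℝ) ≠ 0 := Nat.cast_ne_zero.mpr (by omega)
  have hY : (0 : ℝ) < (Nat.choose (b * k + nA) nA : ℝ) := by
    exact_mod_cast Nat.choose_pos (Nat.le_add_left nA (b * k))
  have hZ : (0 : ℝ) < (Nat.choose (c * k + nB) nB : ℝ) := by
    exact_mod_cast Nat.choose_pos (Nat.le_add_left nB (c * k))
  rw [e3 k hk, e1 k hk, e2 k hk]
  have hkn : (k : ℝ) ^ n = (k : ℝ) ^ nA * (k : ℝ) ^ nB := by rw [hn, pow_add]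
  rw [hkn]
  field_simp
end

section
/- Let t_A, t_B be positive real numbers, n_A, n_B natural numbers, and define u := t_A·n_A, v := t_B·n_B and Q(s) := (s − u − v)^{n_A + n_B} / ((s − u)^{n_A} · (s − v)^{n_B}) for real s. Then Q is nondecreasing on the interval (u + v, ∞): for all real s₁, s₂ with u + v < s₁ ≤ s₂ one has Q(s₁) ≤ Q(s₂). -/
theorem no_overlap_prob_mono (tA tB : ℝ) (htA : 0 < tA) (htB : 0 < tB) (nA nB : ℕ)
    (s₁ s₂ : ℝ) (h₁ : tA * nA + tB * nB < s₁) (h₁₂ : s₁ ≤ s₂) :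
    (s₁ - tA * nA - tB * nB) ^ (nA + nB) /
        ((s₁ - tA * nA) ^ nA * (s₁ - tB * nB) ^ nB)
      ≤ (s₂ - tA * nA - tB * nB) ^ (nA + nB) /
        ((s₂ - tA * nA) ^ nA * (s₂ - tB * nB) ^ nB) := by
  set u := tA * nA with hu
  set v := tB * nB with hv
  have hu0 : 0 ≤ u := by positivity
  have hv0 : 0 ≤ v := by positivity
  have h₂ : u + v < s₂ := lt_of_lt_of_le h₁ h₁₂
  have ha₁ : 0 < s₁ - u := by linarith
  have ha₂ : 0 < s₂ - u := by linarith
  have hb₁ : 0 < s₁ - v := by linarith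
  have hb₂ : 0 < s₂ - v := by linarith
  have hc₁ : 0 ≤ s₁ - u - v := by linarith
  have hc₂ : 0 ≤ s₂ - u - v := by linarith
  have key : ∀ s : ℝ, 0 < s - u → 0 < s - v →
      (s - u - v) ^ (nA + nB) / ((s - u) ^ nA * (s - v) ^ nB)
      = ((s - u - v) / (s - u)) ^ nA * ((s - u - v) / (s - v)) ^ nB := by
    intro s h1 h2
    rw [pow_add, div_pow, div_pow]
    ring
  rw [key s₁ ha₁ hb₁, key s₂ ha₂ hb₂]
  apply mul_le_mul
  · apply pow_le_pow_left₀ (by positivity)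
    rw [div_le_div_iff₀ ha₁ ha₂]; nlinarith
  · apply pow_le_pow_left₀ (by positivity)
    rw [div_le_div_iff₀ hb₁ hb₂]; nlinarith
  · positivity
  · positivity
end

section
/- Let T, t_A, t_B be positive real numbers with t_B ≤ t_A, let n_A, n_B be natural numbers, and set u := t_A·n_A, v := t_B·n_B, Q(s) := (s − u − v)^{n_A + n_B} / ((s − u)^{n_A} · (s − v)^{n_B}), α_A := T + t_A − u − v, α_B := α_A − (t_A − t_B)/2 and τ := max(u, v). If α_B > 0, then Q(T + t_A) − Q(T + (t_A + t_B)/2) ≤ Q(T + (t_A + t_B)/2) · ( (α_A·(α_B + τ) / (α_B·(α_A + τ)))^{n_A + n_B} − 1 ). In particular, the error E := Q(T + t_A) − Q(T + (t_A + t_B)/2) incurred by extending the total time by the midpoint value δ* = (t_A + t_B)/2 instead of t_A is bounded above by Q(T + δ*) · ((α_A(α_B + τ))/(α_B(α_A + τ)))^{n_A + n_B} − Q(T + δ*). -/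
theorem key_error_bound (a b u v τ : ℝ) (hb : 0 < b) (hba : b ≤ a) (hu : 0 ≤ u) (hv : 0 ≤ v)
    (huτ : u ≤ τ) (hvτ : v ≤ τ) (nA nB : ℕ) :
    a ^ (nA + nB) / ((a + v) ^ nA * (a + u) ^ nB)
      - b ^ (nA + nB) / ((b + v) ^ nA * (b + u) ^ nB)
    ≤ b ^ (nA + nB) / ((b + v) ^ nA * (b + u) ^ nB) *
        ((a * (b + τ) / (b * (a + τ))) ^ (nA + nB) - 1) := by
  have ha : 0 < a := lt_of_lt_of_le hb hba
  have hτ : 0 ≤ τ := le_trans hu huτ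
  have hbv : 0 < b + v := by linarith
  have hbu : 0 < b + u := by linarith
  have hav : 0 < a + v := by linarith
  have hau : 0 < a + u := by linarith
  have haτ : 0 < a + τ := by linarith
  have hbτ : 0 < b + τ := by linarith
  have hD1 : 0 < (a + v) ^ nA * (a + u) ^ nB := mul_pos (pow_pos hav _) (pow_pos hau _)
  have hD2 : 0 < (b + v) ^ nA * (b + u) ^ nB := mul_pos (pow_pos hbv _) (pow_pos hbu _)
  have hD3 : 0 < (b * (a + τ)) ^ (nA + nB) := pow_pos (mul_pos hb haτ) _
  have main : a ^ (nA + nB) / ((a + v) ^ nA * (a + u) ^ nB)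
      ≤ b ^ (nA + nB) / ((b + v) ^ nA * (b + u) ^ nB)
        * (a * (b + τ) / (b * (a + τ))) ^ (nA + nB) := by
    rw [div_pow, div_mul_div_comm, div_le_div_iff₀ hD1 (mul_pos hD2 hD3)]
    have h1 : a * b * (a + τ) * (b + v) ≤ a * b * (b + τ) * (a + v) := by
      nlinarith [mul_nonneg (mul_nonneg (mul_nonneg ha.le hb.le) (sub_nonneg.2 hba))
        (sub_nonneg.2 hvτ)]
    have h2 : a * b * (a + τ) * (b + u) ≤ a * b * (b + τ) * (a + u) := by
      nlinarith [mul_nonneg (mul_nonneg (mul_nonneg ha.le hb.le) (sub_nonneg.2 hba))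
        (sub_nonneg.2 huτ)]
    calc a ^ (nA + nB) * ((b + v) ^ nA * (b + u) ^ nB * (b * (a + τ)) ^ (nA + nB))
        = (a * b * (a + τ) * (b + v)) ^ nA * (a * b * (a + τ) * (b + u)) ^ nB := by simp only [pow_add, mul_pow]; ring
      _ ≤ (a * b * (b + τ) * (a + v)) ^ nA * (a * b * (b + τ) * (a + u)) ^ nB := by
          apply mul_le_mul (pow_le_pow_left₀ (by positivity) h1 _)
            (pow_le_pow_left₀ (by positivity) h2 _) (by positivity) (by positivity)
      _ = b ^ (nA + nB) * (a * (b + τ)) ^ (nA + nB) * ((a + v) ^ nA * (a + u) ^ nB) := by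
          simp only [pow_add, mul_pow]; ring
  have expand : b ^ (nA + nB) / ((b + v) ^ nA * (b + u) ^ nB) *
        ((a * (b + τ) / (b * (a + τ))) ^ (nA + nB) - 1)
      = b ^ (nA + nB) / ((b + v) ^ nA * (b + u) ^ nB)
          * (a * (b + τ) / (b * (a + τ))) ^ (nA + nB)
        - b ^ (nA + nB) / ((b + v) ^ nA * (b + u) ^ nB) := by ring
  rw [expand]
  linarith

theorem error_bound (T tA tB : ℝ) (hT : 0 < T) (htB : 0 < tB) (htBA : tB ≤ tA)
    (nA nB : ℕ)
    (hαB : 0 < (T + tA - tA * nA - tB * nB) - (tA - tB) / 2) :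
    (T + tA - tA * nA - tB * nB) ^ (nA + nB) /
        ((T + tA - tA * nA) ^ nA * (T + tA - tB * nB) ^ nB)
      - (T + (tA + tB) / 2 - tA * nA - tB * nB) ^ (nA + nB) /
        ((T + (tA + tB) / 2 - tA * nA) ^ nA * (T + (tA + tB) / 2 - tB * nB) ^ nB)
    ≤ ((T + (tA + tB) / 2 - tA * nA - tB * nB) ^ (nA + nB) /
        ((T + (tA + tB) / 2 - tA * nA) ^ nA * (T + (tA + tB) / 2 - tB * nB) ^ nB)) *
      (((T + tA - tA * nA - tB * nB) *
            (((T + tA - tA * nA - tB * nB) - (tA - tB) / 2) + max (tA * nA) (tB * nB)) /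
          ((((T + tA - tA * nA - tB * nB) - (tA - tB) / 2)) *
            ((T + tA - tA * nA - tB * nB) + max (tA * nA) (tB * nB)))) ^ (nA + nB) - 1) := by
  have hu : (0:ℝ) ≤ tA * nA := mul_nonneg (by linarith) (Nat.cast_nonneg _)
  have hv : (0:ℝ) ≤ tB * nB := mul_nonneg htB.le (Nat.cast_nonneg _)
  have h := key_error_bound (T + tA - tA * nA - tB * nB)
      ((T + tA - tA * nA - tB * nB) - (tA - tB) / 2) (tA * nA) (tB * nB)
      (max (tA * nA) (tB * nB)) hαB (by linarith) hu hv
      (le_max_left _ _) (le_max_right _ _) nA nB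
  refine le_trans (le_of_eq ?_) (le_trans h (le_of_eq ?_)) <;> ring
end
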